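/- Let k > 0, σ ∈ ℂ, and complex numbers M_0,…,M_k. The inclusion Σ_{U,Y} ⊆ Σ^k_{σ,M_k} holds if and only if there exists ξ ∈ ℂ^{T−n+1} such that H_n(U) ξ = γ_n^{(k)}(σ) and H_n(Y) ξ − M_k γ_n(σ) = Σ_{j=0}^{k−1} C(k,j) M_j γ_n^{(k−j)}(σ). -/

import Mathlib

open Matrix

/-- Hankel matrix of depth `n` built from data `W = (w_0, …, w_T)`. -/
def hankel (n T : ℕ) (h : n ≤ T) (W : Fin (T + 1) → ℝ) :
    Matrix (Fin (n + 1)) (Fin (T - n + 1)) ℝ :=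
  Matrix.of fun i j => W ⟨i.1 + j.1, by omega⟩

/-- The order-`n` system with parameters `[q  -p]` explains the data `(U, Y)`. -/
def Explains (n T : ℕ) (h : n ≤ T) (U Y : Fin (T + 1) → ℝ)
    (q : Fin (n + 1) → ℝ) (p : Fin n → ℝ) : Prop :=
  ∀ j : Fin (T - n + 1),
    ∑ i : Fin (n + 1), q i * U ⟨i.1 + j.1, by omega⟩
      - ∑ i : Fin n, p i * Y ⟨i.1 + j.1, by omega⟩ = Y ⟨n + j.1, by omega⟩

/-- `dd σ m i = (z^i)^{(m)}(σ)`. -/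
noncomputable def dd (σ : ℂ) (m i : ℕ) : ℂ := iteratedDeriv m (fun z : ℂ => z ^ i) σ

/-- `ee σ k M i = Σ_{j=0}^{k} C(k,j) M_j (z^i)^{(k-j)}(σ)`. -/
noncomputable def ee (σ : ℂ) (k : ℕ) (M : ℕ → ℂ) (i : ℕ) : ℂ :=
  ∑ j ∈ Finset.range (k + 1), (k.choose j : ℂ) * M j * dd σ (k - j) i

lemma dd_zero (σ : ℂ) (i : ℕ) : dd σ 0 i = σ ^ i := by
  simp [dd, iteratedDeriv_zero]

lemma contDiff_zpow (m i : ℕ) : ContDiff ℂ (m : ℕ∞) (fun z : ℂ => z ^ i) :=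
  contDiff_id.pow i

lemma itd_sum {ι : Type*} (s : Finset ι) (m : ℕ) (σ : ℂ) (c : ι → ℂ) (e : ι → ℕ) :
    iteratedDeriv m (fun z : ℂ => ∑ i ∈ s, c i * z ^ e i) σ
      = ∑ i ∈ s, c i * dd σ m (e i) := by
  have key := iteratedFDeriv_sum (𝕜 := ℂ) (f := fun i : ι => fun z : ℂ => c i • z ^ e i)
    (u := s) (i := m) (fun i _ => ((contDiff_zpow m (e i)).const_smul (c i)))
  have h1 : (fun z : ℂ => ∑ i ∈ s, c i * z ^ e i)
      = fun z : ℂ => ∑ i ∈ s, c i • z ^ e i := by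
    funext z; simp [smul_eq_mul]
  rw [iteratedDeriv_eq_iteratedFDeriv, h1, key]
  simp only [Finset.sum_apply, ContinuousMultilinearMap.sum_apply]
  refine Finset.sum_congr rfl fun i _ => ?_
  have h2 : (fun z : ℂ => c i • z ^ e i) = c i • fun z : ℂ => z ^ e i := rfl
  rw [h2, iteratedFDeriv_const_smul_apply (contDiff_zpow m (e i)).contDiffAt]
  rw [ContinuousMultilinearMap.smul_apply, dd, iteratedDeriv_eq_iteratedFDeriv]
  simp [smul_eq_mul]

lemma itd_add {m : ℕ} (σ : ℂ) {f g : ℂ → ℂ} (hf : ContDiff ℂ (m : ℕ∞) f)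
    (hg : ContDiff ℂ (m : ℕ∞) g) :
    iteratedDeriv m (fun z => f z + g z) σ = iteratedDeriv m f σ + iteratedDeriv m g σ := by
  simp only [iteratedDeriv_eq_iteratedFDeriv]
  rw [show (fun z => f z + g z) = f + g from rfl, iteratedFDeriv_add_apply hf.contDiffAt hg.contDiffAt]
  simp

lemma exists_factor {K V W W' : Type*} [Field K] [AddCommGroup V] [Module K V]
    [AddCommGroup W] [Module K W] [AddCommGroup W'] [Module K W']
    (g : V →ₗ[K] W) (f : V →ₗ[K] W') (hle : LinearMap.ker g ≤ LinearMap.ker f) :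
    ∃ h : W →ₗ[K] W', ∀ v, f v = h (g v) := by
  obtain ⟨h, hh⟩ := LinearMap.exists_extend
    (((LinearMap.ker g).liftQ f hle).comp (g.quotKerEquivRange).symm.toLinearMap)
  refine ⟨h, fun v => ?_⟩
  have h1 : g v = (LinearMap.range g).subtype ⟨g v, LinearMap.mem_range_self g v⟩ := rfl
  rw [h1, ← LinearMap.comp_apply, hh]
  simp only [LinearMap.comp_apply, LinearEquiv.coe_coe,
    LinearMap.quotKerEquivRange_symm_apply_image, Submodule.liftQ_apply]
  rfl

lemma sum_single_mulC {m : ℕ} (i : Fin m) (F : Fin m → ℂ) :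
    ∑ i' : Fin m, (((Pi.single i 1 : Fin m → ℝ) i' : ℝ) : ℂ) * F i' = F i := by
  classical
  rw [Finset.sum_eq_single i]
  · simp
  · intro b _ hb; simp [Pi.single_apply, hb]
  · simp

lemma sum_single_mulR {m : ℕ} (i : Fin m) (F : Fin m → ℝ) :
    ∑ i' : Fin m, (Pi.single i 1 : Fin m → ℝ) i' * F i' = F i := by
  classical
  rw [Finset.sum_eq_single i]
  · simp
  · intro b _ hb; simp [Pi.single_apply, hb]
  · simp

theorem stmt_10 (n T : ℕ) (hT : n ≤ T) (U Y : Fin (T + 1) → ℝ) (σ : ℂ)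
    (k : ℕ) (hk : 0 < k) (M : ℕ → ℂ)
    (hne : ∃ (q : Fin (n + 1) → ℝ) (p : Fin n → ℝ), Explains n T hT U Y q p) :
    (∀ (q : Fin (n + 1) → ℝ) (p : Fin n → ℝ), Explains n T hT U Y q p →
        iteratedDeriv k (fun z : ℂ => ∑ i : Fin (n + 1), (q i : ℂ) * z ^ (i : ℕ)) σ
          = ∑ j ∈ Finset.range (k + 1), (k.choose j : ℂ) * M j *
              iteratedDeriv (k - j)
                (fun z : ℂ => z ^ n + ∑ i : Fin n, (p i : ℂ) * z ^ (i : ℕ)) σ) ↔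
      ∃ ξ : Fin (T - n + 1) → ℂ,
        ((hankel n T hT U).map (Complex.ofReal : ℝ → ℂ)) *ᵥ ξ
            = (fun i : Fin (n + 1) => iteratedDeriv k (fun z : ℂ => z ^ (i : ℕ)) σ) ∧
        ((hankel n T hT Y).map (Complex.ofReal : ℝ → ℂ)) *ᵥ ξ
            - M k • (fun i : Fin (n + 1) => σ ^ (i : ℕ))
          = (fun i : Fin (n + 1) => ∑ j ∈ Finset.range k, (k.choose j : ℂ) * M j *
              iteratedDeriv (k - j) (fun z : ℂ => z ^ (i : ℕ)) σ) := by
  classical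
  obtain ⟨q₀, p₀, hqp₀⟩ := hne
  have keyR : ∀ (p : Fin n → ℝ) (m : ℕ),
      iteratedDeriv m (fun z : ℂ => z ^ n + ∑ i : Fin n, (p i : ℂ) * z ^ (i : ℕ)) σ
        = dd σ m n + ∑ i : Fin n, (p i : ℂ) * dd σ m i.1 := by
    intro p m
    have hsum : ContDiff ℂ (m : ℕ∞) (fun z : ℂ => ∑ i : Fin n, (p i : ℂ) * z ^ (i : ℕ)) := by
      apply ContDiff.sum
      intro i _
      exact contDiff_const.mul (contDiff_zpow m (i : ℕ))
    rw [itd_add σ (contDiff_zpow m n) hsum]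
    rw [itd_sum Finset.univ m σ (fun i : Fin n => (p i : ℂ)) (fun i => (i : ℕ))]
    rfl
  have hEqIff : ∀ (q : Fin (n + 1) → ℝ) (p : Fin n → ℝ),
      (iteratedDeriv k (fun z : ℂ => ∑ i : Fin (n + 1), (q i : ℂ) * z ^ (i : ℕ)) σ
        = ∑ j ∈ Finset.range (k + 1), (k.choose j : ℂ) * M j *
            iteratedDeriv (k - j)
              (fun z : ℂ => z ^ n + ∑ i : Fin n, (p i : ℂ) * z ^ (i : ℕ)) σ)
      ↔ ((∑ i : Fin (n + 1), (q i : ℂ) * dd σ k i.1)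
          - ∑ i : Fin n, (p i : ℂ) * ee σ k M i.1 = ee σ k M n) := by
    intro q p
    rw [itd_sum Finset.univ k σ (fun i : Fin (n + 1) => (q i : ℂ)) (fun i => (i : ℕ))]
    have hR : ∑ j ∈ Finset.range (k + 1), (k.choose j : ℂ) * M j *
            iteratedDeriv (k - j)
              (fun z : ℂ => z ^ n + ∑ i : Fin n, (p i : ℂ) * z ^ (i : ℕ)) σ
        = ee σ k M n + ∑ i : Fin n, (p i : ℂ) * ee σ k M i.1 := by
      simp only [keyR p, ee, mul_add, Finset.sum_add_distrib]
      congr 1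
      simp only [Finset.mul_sum]
      rw [Finset.sum_comm]
      exact Finset.sum_congr rfl fun i _ => Finset.sum_congr rfl fun j _ => by ring
    rw [hR]
    exact sub_eq_iff_eq_add.symm
  have hMulU : ∀ (ξ : Fin (T - n + 1) → ℂ) (i : Fin (n + 1)),
      (((hankel n T hT U).map (Complex.ofReal : ℝ → ℂ)) *ᵥ ξ) i
        = ∑ j, (U ⟨i.1 + j.1, by omega⟩ : ℂ) * ξ j := by
    intro ξ i
    simp [mulVec, dotProduct, hankel, Matrix.map_apply]
  have hMulY : ∀ (ξ : Fin (T - n + 1) → ℂ) (i : Fin (n + 1)),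
      (((hankel n T hT Y).map (Complex.ofReal : ℝ → ℂ)) *ᵥ ξ) i
        = ∑ j, (Y ⟨i.1 + j.1, by omega⟩ : ℂ) * ξ j := by
    intro ξ i
    simp [mulVec, dotProduct, hankel, Matrix.map_apply]
  have hee_split : ∀ i : ℕ, ee σ k M i
      = (∑ j ∈ Finset.range k, (k.choose j : ℂ) * M j * dd σ (k - j) i) + M k * σ ^ i := by
    intro i
    rw [ee, Finset.sum_range_succ, Nat.choose_self, Nat.sub_self, dd_zero]
    push_cast
    ring
  constructor
  · -- forward direction
    intro H
    let g : ((Fin (n + 1) → ℝ) × (Fin n → ℝ)) →ₗ[ℝ] (Fin (T - n + 1) → ℝ) :=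
      { toFun := fun v j => ∑ i : Fin (n + 1), v.1 i * U ⟨i.1 + j.1, by omega⟩
          - ∑ i : Fin n, v.2 i * Y ⟨i.1 + j.1, by omega⟩
        map_add' := by
          intro v w
          funext j
          simp only [Prod.fst_add, Prod.snd_add, Pi.add_apply, add_mul,
            Finset.sum_add_distrib]
          ring
        map_smul' := by
          intro c v
          funext j
          simp only [Prod.smul_fst, Prod.smul_snd, Pi.smul_apply, smul_eq_mul,
            RingHom.id_apply]
          rw [mul_sub, Finset.mul_sum, Finset.mul_sum]
          simp [mul_assoc] }
    let f : ((Fin (n + 1) → ℝ) × (Fin n → ℝ)) →ₗ[ℝ] ℂ :=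
      { toFun := fun v => (∑ i : Fin (n + 1), (v.1 i : ℂ) * dd σ k i.1)
          - ∑ i : Fin n, (v.2 i : ℂ) * ee σ k M i.1
        map_add' := by
          intro v w
          simp only [Prod.fst_add, Prod.snd_add, Pi.add_apply, Complex.ofReal_add, add_mul,
            Finset.sum_add_distrib]
          ring
        map_smul' := by
          intro c v
          simp only [Prod.smul_fst, Prod.smul_snd, Pi.smul_apply, smul_eq_mul,
            Complex.ofReal_mul, RingHom.id_apply, Complex.real_smul]
          rw [mul_sub, Finset.mul_sum, Finset.mul_sum]
          simp [mul_assoc] }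
    have hgval : ∀ (v : (Fin (n + 1) → ℝ) × (Fin n → ℝ)) (j : Fin (T - n + 1)),
        g v j = ∑ i : Fin (n + 1), v.1 i * U ⟨i.1 + j.1, by omega⟩
          - ∑ i : Fin n, v.2 i * Y ⟨i.1 + j.1, by omega⟩ := fun v j => rfl
    have hfval : ∀ v : (Fin (n + 1) → ℝ) × (Fin n → ℝ),
        f v = (∑ i : Fin (n + 1), (v.1 i : ℂ) * dd σ k i.1)
          - ∑ i : Fin n, (v.2 i : ℂ) * ee σ k M i.1 := fun v => rfl
    have hfexpl : ∀ v : (Fin (n + 1) → ℝ) × (Fin n → ℝ),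
        Explains n T hT U Y v.1 v.2 → f v = ee σ k M n := by
      intro v hv
      exact (hEqIff v.1 v.2).mp (H v.1 v.2 hv)
    have hker : LinearMap.ker g ≤ LinearMap.ker f := by
      intro v hv
      rw [LinearMap.mem_ker] at hv ⊢
      have h2 : Explains n T hT U Y (q₀ + v.1) (p₀ + v.2) := by
        intro j
        have hv0 : g v j = 0 := by rw [hv]; rfl
        rw [hgval] at hv0
        have hq := hqp₀ j
        simp only [Pi.add_apply, add_mul, Finset.sum_add_distrib]
        linarith [hv0, hq]
      have e1 : f ((q₀, p₀) + v) = ee σ k M n := hfexpl _ h2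
      have e2 : f (q₀, p₀) = ee σ k M n := hfexpl _ hqp₀
      have e3 := map_add f (q₀, p₀) v
      rw [e1, e2] at e3
      linear_combination -e3
    obtain ⟨h, hfac⟩ := exists_factor g f hker
    set ξ : Fin (T - n + 1) → ℂ := fun j => h (Pi.single j (1 : ℝ) : Fin (T - n + 1) → ℝ) with hξ
    have hrep : ∀ w : Fin (T - n + 1) → ℝ, h w = ∑ j, (w j : ℂ) * ξ j := by
      intro w
      have hw : w = ∑ j, Pi.single j (w j) := (Finset.univ_sum_single w).symm
      conv_lhs => rw [hw]
      rw [map_sum]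
      refine Finset.sum_congr rfl fun j _ => ?_
      have hs : (Pi.single j (w j) : Fin (T - n + 1) → ℝ)
          = w j • (Pi.single j 1 : Fin (T - n + 1) → ℝ) := by
        funext t
        by_cases ht : t = j
        · subst ht; simp
        · simp [Pi.single_apply, ht]
      rw [hs, h.map_smul, Complex.real_smul, hξ]
    have hfrep : ∀ v : (Fin (n + 1) → ℝ) × (Fin n → ℝ),
        f v = ∑ j, ((g v j : ℝ) : ℂ) * ξ j := by
      intro v; rw [hfac v, hrep]
    refine ⟨ξ, ?_, ?_⟩
    · funext i
      rw [hMulU ξ i]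
      have hv := hfrep (Pi.single i 1, 0)
      rw [hfval] at hv
      simp only [Pi.zero_apply, Complex.ofReal_zero, zero_mul, Finset.sum_const_zero,
        sub_zero] at hv
      rw [sum_single_mulC i (fun i' => dd σ k i'.1)] at hv
      rw [show (∑ j, ((g (Pi.single i 1, (0 : Fin n → ℝ)) j : ℝ) : ℂ) * ξ j)
          = ∑ j, (U ⟨i.1 + j.1, by omega⟩ : ℂ) * ξ j by
        refine Finset.sum_congr rfl fun j _ => ?_
        rw [hgval]
        simp only [Pi.zero_apply, zero_mul, Finset.sum_const_zero, sub_zero]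
        rw [sum_single_mulR i (fun i' => U ⟨i'.1 + j.1, by omega⟩)]] at hv
      exact hv.symm
    · funext i
      have hYrow : ∑ j, (Y ⟨i.1 + j.1, by omega⟩ : ℂ) * ξ j = ee σ k M i.1 := by
        rcases Nat.lt_or_ge i.1 n with hi | hi
        · have hv := hfrep (0, Pi.single ⟨i.1, hi⟩ 1)
          rw [hfval] at hv
          simp only [Pi.zero_apply, Complex.ofReal_zero, zero_mul, Finset.sum_const_zero,
            zero_sub] at hv
          rw [sum_single_mulC (⟨i.1, hi⟩ : Fin n) (fun i' => ee σ k M i'.1)] at hv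
          rw [show (∑ j, ((g ((0 : Fin (n + 1) → ℝ), Pi.single ⟨i.1, hi⟩ 1) j : ℝ) : ℂ) * ξ j)
              = -∑ j, (Y ⟨i.1 + j.1, by omega⟩ : ℂ) * ξ j by
            rw [← Finset.sum_neg_distrib]
            refine Finset.sum_congr rfl fun j _ => ?_
            rw [hgval]
            simp only [Pi.zero_apply, zero_mul, Finset.sum_const_zero, zero_sub]
            rw [sum_single_mulR (⟨i.1, hi⟩ : Fin n) (fun i' => Y ⟨i'.1 + j.1, by omega⟩)]
            push_cast
            ring] at hv
          exact (neg_inj.mp hv).symm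
        · have hin : i.1 = n := by omega
          have hv := hfrep (q₀, p₀)
          have e2 : f (q₀, p₀) = ee σ k M n := hfexpl _ hqp₀
          rw [e2] at hv
          rw [show (∑ j, ((g (q₀, p₀) j : ℝ) : ℂ) * ξ j)
              = ∑ j, (Y ⟨i.1 + j.1, by omega⟩ : ℂ) * ξ j by
            refine Finset.sum_congr rfl fun j _ => ?_
            rw [hgval, hqp₀ j]
            have hfin : (⟨n + j.1, by omega⟩ : Fin (T + 1)) = ⟨i.1 + j.1, by omega⟩ := by
              apply Fin.ext
              simp
              omega
            rw [hfin]] at hv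
          rw [← hv, hin]
      simp only [Pi.sub_apply, Pi.smul_apply, smul_eq_mul]
      rw [hMulY ξ i, hYrow, hee_split]
      simp only [dd]
      ring
  · -- reverse direction
    rintro ⟨ξ, h1, h2⟩ q p hqp
    rw [hEqIff q p]
    have hU : ∀ i : Fin (n + 1), ∑ j, (U ⟨i.1 + j.1, by omega⟩ : ℂ) * ξ j = dd σ k i.1 := by
      intro i
      rw [← hMulU ξ i, h1]
      rfl
    have hYrow : ∀ i : Fin (n + 1), ∑ j, (Y ⟨i.1 + j.1, by omega⟩ : ℂ) * ξ j
        = ee σ k M i.1 := by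
      intro i
      have hv := congrFun h2 i
      simp only [Pi.sub_apply, Pi.smul_apply, smul_eq_mul] at hv
      rw [hMulY ξ i] at hv
      rw [hee_split]
      simp only [dd]
      linear_combination hv
    have hsplit : ∑ j, ((∑ i : Fin (n + 1), q i * U ⟨i.1 + j.1, by omega⟩
          - ∑ i : Fin n, p i * Y ⟨i.1 + j.1, by omega⟩ : ℝ) : ℂ) * ξ j
        = (∑ i : Fin (n + 1), (q i : ℂ) * ∑ j, (U ⟨i.1 + j.1, by omega⟩ : ℂ) * ξ j)
          - ∑ i : Fin n, (p i : ℂ) * ∑ j, (Y ⟨i.1 + j.1, by omega⟩ : ℂ) * ξ j := by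
      push_cast
      simp only [sub_mul, Finset.sum_mul, Finset.sum_sub_distrib, Finset.mul_sum]
      congr 1 <;> rw [Finset.sum_comm] <;>
        exact Finset.sum_congr rfl fun i _ => Finset.sum_congr rfl fun j _ => by ring
    calc (∑ i : Fin (n + 1), (q i : ℂ) * dd σ k i.1)
        - ∑ i : Fin n, (p i : ℂ) * ee σ k M i.1
        = (∑ i : Fin (n + 1), (q i : ℂ) * ∑ j, (U ⟨i.1 + j.1, by omega⟩ : ℂ) * ξ j)
          - ∑ i : Fin n, (p i : ℂ) * ∑ j, (Y ⟨i.1 + j.1, by omega⟩ : ℂ) * ξ j := by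
          congr 1
          · exact Finset.sum_congr rfl fun i _ => by rw [hU i]
          · refine Finset.sum_congr rfl fun i _ => ?_
            rw [hYrow ⟨i.1, by omega⟩]
      _ = ∑ j, ((∑ i : Fin (n + 1), q i * U ⟨i.1 + j.1, by omega⟩
            - ∑ i : Fin n, p i * Y ⟨i.1 + j.1, by omega⟩ : ℝ) : ℂ) * ξ j := hsplit.symm
      _ = ∑ j, (Y ⟨n + j.1, by omega⟩ : ℂ) * ξ j := by
          refine Finset.sum_congr rfl fun j _ => ?_
          rw [hqp j]
      _ = ee σ k M n := by
          have := hYrow ⟨n, by omega⟩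
          simpa using this
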